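/- For coprime integers p,q > 1, the number f_{p,q}(n) of representations of n as a sum of distinct terms of the form p^α q^β (α,β ∈ ℕ) is at most 2^{(log n)²/(2 log p log q) · (1 + O(1/log n))}. -/

import Mathlib

open Filter Real
open scoped Classical

noncomputable def fpq (p q n : ℕ) : ℕ :=
  Set.ncard {S : Finset ℕ | (∀ k ∈ S, ∃ a b : ℕ, k = p ^ a * q ^ b) ∧ S.sum id = n}

lemma step1 (p q n : ℕ) :
    fpq p q n ≤ 2 ^ ((Finset.range (n+1)).filter (fun k => ∃ a b : ℕ, k = p ^ a * q ^ b)).card := by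
  set T := (Finset.range (n+1)).filter (fun k => ∃ a b : ℕ, k = p ^ a * q ^ b) with hT
  have hsub : {S : Finset ℕ | (∀ k ∈ S, ∃ a b : ℕ, k = p ^ a * q ^ b) ∧ S.sum id = n}
      ⊆ ↑T.powerset := by
    intro S hS
    obtain ⟨h1, h2⟩ := hS
    simp only [Finset.coe_powerset, Set.mem_preimage, Set.mem_powerset_iff, Finset.coe_subset,
      Finset.mem_coe]
    intro k hk
    simp only [hT, Finset.mem_filter, Finset.mem_range]
    refine ⟨Nat.lt_succ_of_le ?_, h1 k hk⟩
    calc k = id k := rfl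
    _ ≤ S.sum id := Finset.single_le_sum (fun i _ => Nat.zero_le _) hk
    _ = n := h2
  calc fpq p q n ≤ (↑T.powerset : Set (Finset ℕ)).ncard :=
        Set.ncard_le_ncard hsub (Finset.finite_toSet _)
  _ = T.powerset.card := Set.ncard_coe_finset _
  _ = 2 ^ T.card := Finset.card_powerset _

lemma step2 (p q n : ℕ) (hp : 1 < p) (hq : 1 < q) :
    ((Finset.range (n+1)).filter (fun k => ∃ a b : ℕ, k = p ^ a * q ^ b)).card ≤
      ∑ a ∈ Finset.range (Nat.log p n + 1), (Nat.log q (n / p ^ a) + 1) := by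
  have hsub : (Finset.range (n+1)).filter (fun k => ∃ a b : ℕ, k = p ^ a * q ^ b) ⊆
      (Finset.range (Nat.log p n + 1)).biUnion
        (fun a => (Finset.range (Nat.log q (n / p ^ a) + 1)).image (fun b => p ^ a * q ^ b)) := by
    intro k hk
    simp only [Finset.mem_filter, Finset.mem_range] at hk
    obtain ⟨hkn, a, b, rfl⟩ := hk
    have hkn' : p ^ a * q ^ b ≤ n := Nat.lt_succ_iff.mp hkn
    have hppos : 0 < p ^ a := pow_pos (by omega) _
    have hqpos : 0 < q ^ b := pow_pos (by omega) _
    have hpan : p ^ a ≤ n := le_trans (Nat.le_mul_of_pos_right _ hqpos) hkn'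
    have hnpos : 0 < n := lt_of_lt_of_le hppos hpan
    have ha : a ≤ Nat.log p n := (Nat.le_log_iff_pow_le hp hnpos.ne').mpr hpan
    have hqb : q ^ b ≤ n / p ^ a := (Nat.le_div_iff_mul_le hppos).mpr (by linarith [hkn'])
    have hdivpos : 0 < n / p ^ a := Nat.div_pos hpan hppos
    have hb : b ≤ Nat.log q (n / p ^ a) := (Nat.le_log_iff_pow_le hq hdivpos.ne').mpr hqb
    simp only [Finset.mem_biUnion, Finset.mem_range, Finset.mem_image]
    exact ⟨a, Nat.lt_succ_of_le ha, b, Nat.lt_succ_of_le hb, rfl⟩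
  calc ((Finset.range (n+1)).filter (fun k => ∃ a b : ℕ, k = p ^ a * q ^ b)).card
      ≤ _ := Finset.card_le_card hsub
  _ ≤ ∑ a ∈ Finset.range (Nat.log p n + 1),
        ((Finset.range (Nat.log q (n / p ^ a) + 1)).image (fun b => p ^ a * q ^ b)).card :=
      Finset.card_biUnion_le
  _ ≤ ∑ a ∈ Finset.range (Nat.log p n + 1), (Nat.log q (n / p ^ a) + 1) := by
      refine Finset.sum_le_sum fun a _ => ?_
      simpa using Finset.card_image_le.trans (le_of_eq (Finset.card_range _))

lemma step3 (p q n : ℕ) (hp : 1 < p) (hq : 1 < q) (hn : 1 ≤ n) (hL : 1 ≤ Real.log n) :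
    ((∑ a ∈ Finset.range (Nat.log p n + 1), (Nat.log q (n / p ^ a) + 1) : ℕ) : ℝ) ≤
      (Real.log n)^2/(2*Real.log p*Real.log q) + (1/Real.log p + 1/Real.log q + 1) * Real.log n := by
  set K := Nat.log p n with hK
  set L := Real.log n with hLdef
  set Lp := Real.log p with hLp'
  set Lq := Real.log q with hLq'
  have hLp : 0 < Lp := Real.log_pos (by exact_mod_cast hp)
  have hLq : 0 < Lq := Real.log_pos (by exact_mod_cast hq)
  have hnpos : (0:ℝ) < n := by exact_mod_cast hn
  have hKL : (K:ℝ) * Lp ≤ L := by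
    have h1 : p ^ K ≤ n := Nat.pow_log_le_self p (by omega)
    have h2 : ((p:ℝ)) ^ K ≤ (n:ℝ) := by exact_mod_cast h1
    have h3 : Real.log ((p:ℝ) ^ K) ≤ L := Real.log_le_log (by positivity) h2
    rw [Real.log_pow] at h3
    linarith
  -- termwise bound
  have hterm : ∀ a ∈ Finset.range (K+1),
      ((Nat.log q (n / p ^ a) : ℝ) + 1) ≤ (L - a*Lp)/Lq + 1 := by
    intro a ha
    simp only [Finset.mem_range, Nat.lt_succ_iff] at ha
    have hpan : p ^ a ≤ n := le_trans (Nat.pow_le_pow_right (by omega) ha) (Nat.pow_log_le_self p (by omega))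
    have hppos : 0 < p ^ a := pow_pos (by omega) _
    have hm : 1 ≤ n / p ^ a := Nat.one_le_div_iff hppos |>.mpr hpan
    have h1 : q ^ (Nat.log q (n / p ^ a)) ≤ n / p ^ a := Nat.pow_log_le_self q (by omega)
    have h2 : ((q:ℝ)) ^ (Nat.log q (n / p ^ a)) ≤ ((n / p ^ a : ℕ) : ℝ) := by exact_mod_cast h1
    have h3 : ((n / p ^ a : ℕ) : ℝ) ≤ (n:ℝ) / (p:ℝ) ^ a := by
      have := Nat.cast_div_le (m := n) (n := p ^ a) (α := ℝ)
      simpa using this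
    have h4 : Real.log ((q:ℝ) ^ (Nat.log q (n / p ^ a))) ≤ Real.log ((n:ℝ) / (p:ℝ) ^ a) :=
      Real.log_le_log (by positivity) (h2.trans h3)
    rw [Real.log_pow, Real.log_div (by positivity) (by positivity), Real.log_pow] at h4
    have h5 : (Nat.log q (n / p ^ a) : ℝ) * Lq ≤ L - a * Lp := h4
    have h6 : (Nat.log q (n / p ^ a) : ℝ) ≤ (L - a * Lp)/Lq := (le_div_iff₀ hLq).mpr h5
    linarith
  have hsum : ((∑ a ∈ Finset.range (K + 1), (Nat.log q (n / p ^ a) + 1) : ℕ) : ℝ)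
      ≤ ∑ a ∈ Finset.range (K+1), ((L - a*Lp)/Lq + 1) := by
    push_cast
    exact Finset.sum_le_sum hterm
  have hgauss : ∑ a ∈ Finset.range (K+1), (a:ℝ) = K*(K+1)/2 := by
    have h2 : (∑ a ∈ Finset.range (K+1), a) * 2 = (K+1) * K := by
      simpa using Finset.sum_range_id_mul_two (K+1)
    have h3 : ((∑ a ∈ Finset.range (K+1), a : ℕ) : ℝ) * 2 = ((K:ℝ)+1) * K := by
      exact_mod_cast h2
    push_cast at h3
    linarith
  have heval : ∑ a ∈ Finset.range (K+1), ((L - a*Lp)/Lq + 1)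
      = (((K:ℝ)+1)*L - (K*(K+1)/2)*Lp)/Lq + ((K:ℝ)+1) := by
    rw [Finset.sum_add_distrib, Finset.sum_const, Finset.card_range, ← Finset.sum_div,
      Finset.sum_sub_distrib, Finset.sum_const, Finset.card_range, ← Finset.sum_mul, hgauss]
    push_cast
    ring
  set k := (K:ℝ) with hk
  have hk0 : 0 ≤ k := Nat.cast_nonneg _
  have key : ((k+1)*L - (k*(k+1)/2)*Lp)*Lp + (k+1)*(Lp*Lq) ≤ L^2/2 + (Lq + Lp + Lp*Lq)*L := by
    nlinarith [sq_nonneg (L - k*Lp), mul_le_mul_of_nonneg_right hKL hLq.le,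
      mul_nonneg (mul_nonneg hk0 hLp.le) hLp.le, mul_pos hLp hLq,
      mul_le_mul_of_nonneg_right hL (mul_pos hLp hLq).le]
  have hpos : (0:ℝ) < Lp*Lq := mul_pos hLp hLq
  calc ((∑ a ∈ Finset.range (K + 1), (Nat.log q (n / p ^ a) + 1) : ℕ) : ℝ)
      ≤ (((K:ℝ)+1)*L - (K*(K+1)/2)*Lp)/Lq + ((K:ℝ)+1) := by rw [← heval]; exact hsum
  _ = (((k+1)*L - (k*(k+1)/2)*Lp)*Lp + (k+1)*(Lp*Lq))/(Lp*Lq) := by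
      field_simp
      ring
  _ ≤ (L^2/2 + (Lq + Lp + Lp*Lq)*L)/(Lp*Lq) := by
      gcongr
  _ = L^2/(2*Lp*Lq) + (1/Lp + 1/Lq + 1)*L := by
      field_simp

theorem stmt1 (p q : ℕ) (hp : 1 < p) (hq : 1 < q) (hpq : Nat.Coprime p q) :
    ∃ C : ℝ, 0 < C ∧ ∃ N : ℕ, ∀ n : ℕ, N ≤ n →
      (fpq p q n : ℝ) ≤
        (2 : ℝ) ^ ((Real.log n) ^ 2 / (2 * Real.log p * Real.log q) *
          (1 + C / Real.log n)) := by
  set Lp := Real.log p with hLp'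
  set Lq := Real.log q with hLq'
  have hLp : 0 < Lp := Real.log_pos (by exact_mod_cast hp)
  have hLq : 0 < Lq := Real.log_pos (by exact_mod_cast hq)
  refine ⟨2*Lq + 2*Lp + 2*(Lp*Lq), by positivity, 3, fun n hn => ?_⟩
  have hn1 : 1 ≤ n := by omega
  have hL : 1 ≤ Real.log n := by
    have h3 : (1:ℝ) ≤ Real.log 3 := by
      rw [Real.le_log_iff_exp_le (by norm_num)]
      have := Real.exp_one_lt_d9
      linarith
    calc (1:ℝ) ≤ Real.log 3 := h3
    _ ≤ Real.log n := Real.log_le_log (by norm_num) (by exact_mod_cast hn)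
  set L := Real.log n with hLdef
  have hL0 : (0:ℝ) < L := lt_of_lt_of_le one_pos hL
  -- bound on exponent
  have hm : ((((Finset.range (n+1)).filter (fun k => ∃ a b : ℕ, k = p ^ a * q ^ b)).card : ℕ) : ℝ)
      ≤ L^2/(2*Lp*Lq) * (1 + (2*Lq + 2*Lp + 2*(Lp*Lq))/L) := by
    have h1 := step2 p q n hp hq
    have h2 := step3 p q n hp hq hn1 hL
    have h3 : ((((Finset.range (n+1)).filter (fun k => ∃ a b : ℕ, k = p ^ a * q ^ b)).card : ℕ) : ℝ)
        ≤ ((∑ a ∈ Finset.range (Nat.log p n + 1), (Nat.log q (n / p ^ a) + 1) : ℕ) : ℝ) := by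
      exact_mod_cast h1
    have heq : L^2/(2*Lp*Lq) * (1 + (2*Lq + 2*Lp + 2*(Lp*Lq))/L)
        = L^2/(2*Lp*Lq) + (1/Lp + 1/Lq + 1) * L := by
      field_simp
    rw [heq]
    exact h3.trans h2
  calc (fpq p q n : ℝ)
      ≤ ((2 ^ (((Finset.range (n+1)).filter (fun k => ∃ a b : ℕ, k = p ^ a * q ^ b)).card) : ℕ) : ℝ) := by
        exact_mod_cast step1 p q n
  _ = (2:ℝ) ^ ((((Finset.range (n+1)).filter (fun k => ∃ a b : ℕ, k = p ^ a * q ^ b)).card : ℕ) : ℝ) := by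
        rw [Real.rpow_natCast]
        push_cast
        ring
  _ ≤ (2:ℝ) ^ (L^2/(2*Lp*Lq) * (1 + (2*Lq + 2*Lp + 2*(Lp*Lq))/L)) :=
        Real.rpow_le_rpow_of_exponent_le one_le_two hm
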